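/- Let 0 < λ_2 ≤ λ_1 < 1 with λ_1 + λ2 < 1 and λ_1 < (1-λ_2)², and let K be the unique nonempty compact set with K = λ_1 K ∪ (λ_2 K + 1 - λ_2). Then K ÷ K = {x/y : x, y ∈ K, y ≠ 0} is contained in (⋃_{n ∈ ℤ} λ_1^n · [1-λ_2, 1/(1-λ_2)]) ∪ {0}, and the consecutive intervals λ_1^n[1-λ_2, 1/(1-λ_2)] and λ_1^{n+1}[1-λ_2, 1/(1-λ_2)] are disjoint; in particular K ÷ K ≠ ℝ. -/

import Mathlib

open Pointwise

/-- For the attractor `K` of the IFS `{x ↦ λ₁x, x ↦ λ₂x + 1 - λ₂}` with `0 < λ₂ ≤ λ₁ < 1`,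
`λ₁ + λ₂ < 1` and `λ₁ < (1 - λ₂)²`: the quotient set `K ÷ K` is contained in
`(⋃_{n ∈ ℤ} λ₁^n · [1 - λ₂, 1/(1 - λ₂)]) ∪ {0}`, consecutive scaled intervals are disjoint,
and in particular `K ÷ K ≠ ℝ`. -/

theorem div_not_all (l₁ l₂ : ℝ)
    (h₂pos : 0 < l₂) (h₂₁ : l₂ ≤ l₁) (h₁lt : l₁ < 1) (hsum : l₁ + l₂ < 1)
    (hl : l₁ < (1 - l₂) ^ 2)
    (K : Set ℝ) (hKne : K.Nonempty) (hKc : IsCompact K)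
    (hKattr : K = (fun x => l₁ * x) '' K ∪ (fun x => l₂ * x + 1 - l₂) '' K) :
    {z : ℝ | ∃ x ∈ K, ∃ y ∈ K, y ≠ 0 ∧ z = x / y} ⊆
      (⋃ n : ℤ, l₁ ^ n • Set.Icc (1 - l₂) (1 / (1 - l₂))) ∪ {0} ∧
    (∀ n : ℤ, (l₁ ^ n • Set.Icc (1 - l₂) (1 / (1 - l₂))) ∩
        (l₁ ^ (n + 1) • Set.Icc (1 - l₂) (1 / (1 - l₂))) = ∅) ∧
    {z : ℝ | ∃ x ∈ K, ∃ y ∈ K, y ≠ 0 ∧ z = x / y} ≠ Set.univ := by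
  have h1pos : 0 < l₁ := h₂pos.trans_le h₂₁
  have h1ne : l₁ ≠ 0 := ne_of_gt h1pos
  have hμ : 0 < 1 - l₂ := by linarith
  have hKsub : K ⊆ (fun x => l₁ * x) '' K ∪ (fun x => l₂ * x + 1 - l₂) '' K := hKattr.le
  -- K ⊆ [0,1]
  have hbdd : BddBelow K := hKc.bddBelow
  have hbdd' : BddAbove K := hKc.bddAbove
  have hK01 : K ⊆ Set.Icc 0 1 := by
    have ha : (0:ℝ) ≤ sInf K := by
      have haK : sInf K ∈ K := hKc.sInf_mem hKne
      rcases hKsub haK with ⟨x', hx', hx⟩ | ⟨x', hx', hx⟩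
      · have h1 : sInf K ≤ x' := csInf_le hbdd hx'
        simp only at hx
        nlinarith
      · have h1 : sInf K ≤ x' := csInf_le hbdd hx'
        simp only at hx
        nlinarith
    have hb : sSup K ≤ 1 := by
      have hbK : sSup K ∈ K := hKc.sSup_mem hKne
      have h0b : 0 ≤ sSup K := ha.trans (csInf_le_csSup hKne hbdd hbdd')
      rcases hKsub hbK with ⟨x', hx', hx⟩ | ⟨x', hx', hx⟩
      · have h1 : x' ≤ sSup K := le_csSup hbdd' hx'
        simp only at hx
        nlinarith
      · have h1 : x' ≤ sSup K := le_csSup hbdd' hx'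
        simp only at hx
        nlinarith
    intro x hx
    exact ⟨ha.trans (csInf_le hbdd hx), (le_csSup hbdd' hx).trans hb⟩
  -- structure lemma
  have haux : ∀ N : ℕ, ∀ x ∈ K, l₁ ^ N < x → ∃ n : ℕ, l₁ ^ n * (1 - l₂) ≤ x ∧ x ≤ l₁ ^ n := by
    intro N
    induction N with
    | zero =>
      intro x hx h
      exact absurd ((hK01 hx).2) (by simpa using h.not_ge)
    | succ N ih =>
      intro x hx h
      rcases hKsub hx with ⟨x', hx', hxx⟩ | ⟨x', hx', hxx⟩
      · simp only at hxx
        have hlt : l₁ ^ N < x' := by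
          rw [pow_succ] at h
          nlinarith
        obtain ⟨n, hn1, hn2⟩ := ih x' hx' hlt
        exact ⟨n + 1, by rw [pow_succ]; nlinarith, by rw [pow_succ]; nlinarith⟩
      · simp only at hxx
        have h01 := hK01 hx'
        simp only [Set.mem_Icc] at h01
        refine ⟨0, ?_, ?_⟩ <;> simp <;> nlinarith [h01.1, h01.2]
  have hstruct : ∀ x ∈ K, x ≠ 0 → ∃ n : ℕ, l₁ ^ n * (1 - l₂) ≤ x ∧ x ≤ l₁ ^ n := by
    intro x hx hne
    have hxpos : 0 < x := lt_of_le_of_ne (hK01 hx).1 (Ne.symm hne)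
    obtain ⟨N, hN⟩ := exists_pow_lt_of_lt_one hxpos h₁lt
    exact haux N x hx hN
  -- Part 1
  have part1 : {z : ℝ | ∃ x ∈ K, ∃ y ∈ K, y ≠ 0 ∧ z = x / y} ⊆
      (⋃ n : ℤ, l₁ ^ n • Set.Icc (1 - l₂) (1 / (1 - l₂))) ∪ {0} := by
    rintro z ⟨x, hx, y, hy, hyne, rfl⟩
    rcases eq_or_ne x 0 with rfl | hxne
    · right; simp
    left
    obtain ⟨m, hm1, hm2⟩ := hstruct x hx hxne
    obtain ⟨n, hn1, hn2⟩ := hstruct y hy hyne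
    have hypos : 0 < y := lt_of_le_of_ne (hK01 hy).1 (Ne.symm hyne)
    have hxpos : 0 < x := lt_of_le_of_ne (hK01 hx).1 (Ne.symm hxne)
    refine Set.mem_iUnion.2 ⟨(m : ℤ) - n, ?_⟩
    have hc : (0:ℝ) < l₁ ^ ((m:ℤ) - n) := zpow_pos h1pos _
    have hcc : (l₁:ℝ) ^ ((m:ℤ) - (n:ℤ)) = l₁ ^ m / l₁ ^ n := by
      rw [zpow_sub₀ h1ne, zpow_natCast, zpow_natCast]
    have hpm : (0:ℝ) < l₁ ^ m := pow_pos h1pos m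
    have hpn : (0:ℝ) < l₁ ^ n := pow_pos h1pos n
    have hval : (x / y) / l₁ ^ ((m:ℤ) - (n:ℤ)) = (x * l₁ ^ n) / (y * l₁ ^ m) := by
      rw [hcc]
      field_simp
    rw [Set.mem_smul_set]
    refine ⟨(x / y) / l₁ ^ ((m:ℤ) - n), ⟨?_, ?_⟩, ?_⟩
    · rw [hval, le_div_iff₀ (mul_pos hypos hpm)]
      nlinarith
    · rw [hval, div_le_div_iff₀ (mul_pos hypos hpm) hμ]
      nlinarith
    · simp only [smul_eq_mul]
      rw [mul_div_cancel₀ _ (ne_of_gt hc)]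
  refine ⟨part1, ?_, ?_⟩
  · -- Part 2: disjointness
    intro n
    rw [Set.eq_empty_iff_forall_notMem]
    rintro z ⟨hz1, hz2⟩
    rw [Set.mem_smul_set] at hz1 hz2
    obtain ⟨a, ⟨ha1, ha2⟩, rfl⟩ := hz1
    obtain ⟨b, ⟨hb1, hb2⟩, hab⟩ := hz2
    simp only [smul_eq_mul] at hab
    have hpn : (0:ℝ) < l₁ ^ n := zpow_pos h1pos n
    have hstep : (l₁:ℝ) ^ (n + 1) = l₁ ^ n * l₁ := by
      rw [zpow_add_one₀ h1ne]
    rw [hstep] at hab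
    have key : l₁ ^ n * (1 - l₂) ≤ l₁ ^ n * l₁ * (1 / (1 - l₂)) := by
      calc l₁ ^ n * (1 - l₂) ≤ l₁ ^ n * a := mul_le_mul_of_nonneg_left ha1 hpn.le
        _ = l₁ ^ n * l₁ * b := hab.symm
        _ ≤ l₁ ^ n * l₁ * (1 / (1 - l₂)) :=
            mul_le_mul_of_nonneg_left hb2 (by positivity)
    rw [mul_one_div, le_div_iff₀ hμ] at key
    nlinarith [mul_lt_mul_of_pos_left hl hpn]
  · -- Part 3: not univ
    intro heq
    set t : ℝ := (l₁ / (1 - l₂) + (1 - l₂)) / 2 with ht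
    have hgap : l₁ / (1 - l₂) < 1 - l₂ := by
      rw [div_lt_iff₀ hμ]; nlinarith
    have ht1 : l₁ / (1 - l₂) < t := by rw [ht]; linarith
    have ht2 : t < 1 - l₂ := by rw [ht]; linarith
    have htpos : 0 < t := lt_trans (div_pos h1pos hμ) ht1
    have htmem : t ∈ {z : ℝ | ∃ x ∈ K, ∃ y ∈ K, y ≠ 0 ∧ z = x / y} := by
      rw [heq]; trivial
    rcases part1 htmem with hmem | hmem
    · obtain ⟨n, hn⟩ := Set.mem_iUnion.1 hmem
      rw [Set.mem_smul_set] at hn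
      obtain ⟨a, ⟨ha1, ha2⟩, hta⟩ := hn
      simp only [smul_eq_mul] at hta
      have hapos : 0 < a := lt_of_lt_of_le hμ ha1
      rcases le_or_gt n 0 with hn0 | hn0
      · have h1 : (1:ℝ) ≤ l₁ ^ n := one_le_zpow_of_nonpos₀ h1pos h₁lt.le hn0
        nlinarith
      · have h1 : (l₁:ℝ) ^ n ≤ l₁ ^ (1:ℤ) := zpow_le_zpow_right_of_le_one₀ h1pos h₁lt.le hn0
        rw [zpow_one] at h1
        have hpn : (0:ℝ) < l₁ ^ n := zpow_pos h1pos n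
        have h2 : t ≤ l₁ * (1 / (1 - l₂)) := by nlinarith
        rw [mul_one_div] at h2
        linarith
    · simp only [Set.mem_singleton_iff] at hmem
      linarith [hmem ▸ htpos]
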